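/- Let T be a finite tree (a connected acyclic simple graph), let I be a nonempty set of vertices of T each having degree exactly 3 in T, and let E* be a set of edges of T such that for every connected component C of the subgraph of T induced by I, at most one of the edges of T with exactly one endpoint in C does not belong to E*. Then |E*| ≥ |I| + 1. -/

import Mathlib

open scoped Classical

section Aux
set_option linter.unusedSectionVars false
open SimpleGraph Walk Finset
open SimpleGraph Walk Finset

variable {V : Type*} [Fintype V] [DecidableEq V] {T : SimpleGraph V} [DecidableRel T.Adj]

/-- Support vertices of a walk satisfy a distance bound. -/
lemma aux_support_dist {r y x : V} (w : T.Walk r y) (hx : x ∈ w.support) :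
    T.dist r x + T.dist x y ≤ w.length := by
  have hspec := w.take_spec hx
  have hlen : (w.takeUntil x hx).length + (w.dropUntil x hx).length = w.length := by
    rw [← Walk.length_append, hspec]
  have h1 := SimpleGraph.dist_le (w.takeUntil x hx)
  have h2 := SimpleGraph.dist_le (w.dropUntil x hx)
  omega

lemma aux_shortest (hconn : T.Connected) (r a : V) :
    ∃ p : T.Walk r a, p.IsPath ∧ p.length = T.dist r a := by
  obtain ⟨w, hw⟩ := hconn.exists_walk_length_eq_dist r a
  refine ⟨w.bypass, w.bypass_isPath, le_antisymm ?_ (SimpleGraph.dist_le _)⟩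
  calc w.bypass.length ≤ w.length := w.length_bypass_le
    _ = T.dist r a := hw

lemma aux_concat_path {r a b : V} {p : T.Walk r a} (hp : p.IsPath) (hb : b ∉ p.support)
    (h : T.Adj a b) : (p.concat h).IsPath := by
  rw [Walk.isPath_def, Walk.support_concat]
  rw [Walk.isPath_def] at hp
  simp [List.concat_eq_append, List.nodup_append, hp, hb]
  intro x hx hxb; exact hb (hxb ▸ hx)

lemma aux_adj_dist_ne (hconn : T.Connected) (hacyc : T.IsAcyclic) (r : V) {a b : V}
    (hab : T.Adj a b) : T.dist r a ≠ T.dist r b := by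
  intro h
  obtain ⟨p, hp, hpl⟩ := aux_shortest hconn r a
  obtain ⟨q, hq, hql⟩ := aux_shortest hconn r b
  have hbp : b ∉ p.support := by
    intro hmem
    have h1 := aux_support_dist p hmem
    have h2 : 0 < T.dist b a := hconn.pos_dist_of_ne hab.ne'
    omega
  have hpath : (p.concat hab).IsPath := aux_concat_path hp hbp hab
  have heq := hacyc.path_unique ⟨p.concat hab, hpath⟩ ⟨q, hq⟩
  have heq' : p.concat hab = q := by simpa using heq
  have hlen : (p.concat hab).length = q.length := by rw [heq']
  rw [Walk.length_concat] at hlen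
  omega

lemma aux_adj_dist (hconn : T.Connected) (hacyc : T.IsAcyclic) (r : V) {a b : V}
    (hab : T.Adj a b) : T.dist r b = T.dist r a + 1 ∨ T.dist r a = T.dist r b + 1 := by
  have h1 : T.dist a b = 1 := SimpleGraph.dist_eq_one_iff_adj.mpr hab
  have h2 : T.dist b a = 1 := SimpleGraph.dist_eq_one_iff_adj.mpr hab.symm
  have t1 : T.dist r b ≤ T.dist r a + 1 := by
    have := hconn.dist_triangle (u := r) (v := a) (w := b); omega
  have t2 : T.dist r a ≤ T.dist r b + 1 := by
    have := hconn.dist_triangle (u := r) (v := b) (w := a); omega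
  have := aux_adj_dist_ne hconn hacyc r hab
  omega

lemma aux_unique_parent (hconn : T.Connected) (hacyc : T.IsAcyclic) (r : V) {a a' v : V}
    (hav : T.Adj a v) (ha'v : T.Adj a' v)
    (hd : T.dist r a + 1 = T.dist r v) (hd' : T.dist r a' + 1 = T.dist r v) : a = a' := by
  by_contra hne
  obtain ⟨p, hp, hpl⟩ := aux_shortest hconn r a
  obtain ⟨q, hq, hql⟩ := aux_shortest hconn r a'
  have hvp : v ∉ p.support := fun hmem => by have := aux_support_dist p hmem; omega
  have hvq : v ∉ q.support := fun hmem => by have := aux_support_dist q hmem; omega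
  have hpath1 : (p.concat hav).IsPath := aux_concat_path hp hvp hav
  have hpath2 : (q.concat ha'v).IsPath := aux_concat_path hq hvq ha'v
  have heq := hacyc.path_unique ⟨p.concat hav, hpath1⟩ ⟨q.concat ha'v, hpath2⟩
  have heq' : (p.concat hav) = (q.concat ha'v) := by simpa using heq
  have hasup : a ∈ (q.concat ha'v).support := by
    rw [← heq', Walk.support_concat]
    simp [Walk.end_mem_support]
  rw [Walk.support_concat, List.mem_append] at hasup
  have haq : a ∈ q.support := by
    rcases hasup with h | h
    · exact h
    · exfalso; simp only [List.mem_singleton] at h; subst h; omega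
  have hsd := aux_support_dist q haq
  have hz : T.dist a a' = 0 := by omega
  exact hne (hconn.dist_eq_zero_iff.mp hz)

/-- property: v is the far endpoint of e from root r -/
def FarP (T : SimpleGraph V) (r : V) (e : Sym2 V) (v : V) : Prop :=
  ∃ u, e = s(u, v) ∧ T.dist r u < T.dist r v

lemma aux_far_exists (hconn : T.Connected) (hacyc : T.IsAcyclic) (r : V) {e : Sym2 V}
    (he : e ∈ T.edgeFinset) : ∃ v, FarP T r e v := by
  induction e with
  | _ a b =>
    rw [SimpleGraph.mem_edgeFinset, SimpleGraph.mem_edgeSet] at he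
    rcases aux_adj_dist hconn hacyc r he with h | h
    · exact ⟨b, a, rfl, by omega⟩
    · exact ⟨a, b, Sym2.eq_swap, by omega⟩

lemma aux_far_unique {r : V} {e : Sym2 V} {v v' : V} (h : FarP T r e v) (h' : FarP T r e v') :
    v = v' := by
  obtain ⟨u, rfl, hu⟩ := h
  obtain ⟨u', he, hu'⟩ := h'
  rw [Sym2.eq_iff] at he
  rcases he with ⟨rfl, rfl⟩ | ⟨rfl, rfl⟩
  · rfl
  · omega

noncomputable def farV (T : SimpleGraph V) (r : V) (e : Sym2 V) : V :=
  if h : ∃ v, FarP T r e v then h.choose else r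

lemma aux_farV_spec (hconn : T.Connected) (hacyc : T.IsAcyclic) (r : V) {e : Sym2 V}
    (he : e ∈ T.edgeFinset) : FarP T r e (farV T r e) := by
  have h := aux_far_exists hconn hacyc r he
  rw [farV, dif_pos h]
  exact h.choose_spec

/-- edges with both endpoints in a nonempty set number at most |C| - 1 -/
lemma aux_int_bound (hconn : T.Connected) (hacyc : T.IsAcyclic) (C : Finset V)
    (hC : C.Nonempty) :
    (T.edgeFinset.filter fun e => ∀ v ∈ e, v ∈ C).card + 1 ≤ C.card := by
  obtain ⟨r⟩ : Nonempty V := ⟨hC.choose⟩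
  obtain ⟨v₀, hv₀C, hv₀min⟩ := C.exists_min_image (fun v => T.dist r v) hC
  have hinj : ∀ e ∈ (T.edgeFinset.filter fun e => ∀ v ∈ e, v ∈ C),
      farV T r e ∈ C.erase v₀ := by
    intro e he
    rw [Finset.mem_filter] at he
    set w := farV T r e with hw
    obtain ⟨u, heq, hu⟩ := aux_farV_spec hconn hacyc r he.1
    rw [← hw] at heq hu
    have hmemv : w ∈ e := by rw [heq]; simp
    have hmemu : u ∈ e := by rw [heq]; simp
    refine Finset.mem_erase.mpr ⟨?_, he.2 _ hmemv⟩
    intro hcon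
    have := hv₀min u (he.2 _ hmemu)
    rw [hcon] at hu
    omega
  have hinj2 : ∀ e₁ ∈ (T.edgeFinset.filter fun e => ∀ v ∈ e, v ∈ C),
      ∀ e₂ ∈ (T.edgeFinset.filter fun e => ∀ v ∈ e, v ∈ C),
      farV T r e₁ = farV T r e₂ → e₁ = e₂ := by
    intro e₁ h₁ e₂ h₂ hf
    rw [Finset.mem_filter] at h₁ h₂
    set w₁ := farV T r e₁ with hw₁
    set w₂ := farV T r e₂ with hw₂
    obtain ⟨u₁, heq₁, hu₁⟩ := aux_farV_spec hconn hacyc r h₁.1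
    obtain ⟨u₂, heq₂, hu₂⟩ := aux_farV_spec hconn hacyc r h₂.1
    rw [← hw₁] at heq₁ hu₁
    rw [← hw₂] at heq₂ hu₂
    have hadj₁ : T.Adj u₁ w₁ := by
      have := h₁.1; rw [SimpleGraph.mem_edgeFinset, heq₁, SimpleGraph.mem_edgeSet] at this
      exact this
    have hadj₂ : T.Adj u₂ w₂ := by
      have := h₂.1; rw [SimpleGraph.mem_edgeFinset, heq₂, SimpleGraph.mem_edgeSet] at this
      exact this
    rw [hf] at heq₁ hadj₁ hu₁
    have hd₁ : T.dist r u₁ + 1 = T.dist r w₂ := by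
      rcases aux_adj_dist hconn hacyc r hadj₁ with h | h <;> omega
    have hd₂ : T.dist r u₂ + 1 = T.dist r w₂ := by
      rcases aux_adj_dist hconn hacyc r hadj₂ with h | h <;> omega
    have : u₁ = u₂ := aux_unique_parent hconn hacyc r hadj₁ hadj₂ hd₁ hd₂
    rw [heq₁, heq₂, this]
  have hcard := Finset.card_le_card_of_injOn (farV T r) hinj (fun a ha b hb => hinj2 a ha b hb)
  rw [Finset.card_erase_of_mem hv₀C] at hcard
  have : 1 ≤ C.card := Finset.card_pos.mpr hC
  omega

lemma sym2_rep (e : Sym2 V) : ∃ a b, e = s(a, b) := Sym2.ind (fun a b => ⟨a, b, rfl⟩) e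

lemma aux_boundary_bound (hconn : T.Connected) (hacyc : T.IsAcyclic) (C : Finset V)
    (hC : C.Nonempty) (hdegC : ∀ v ∈ C, T.degree v = 3) :
    C.card + 2 ≤ (T.edgeFinset.filter fun e => ∃ a ∈ C, ∃ b ∉ C, e = s(a, b)).card := by
  classical
  set p1 : Sym2 V → Prop := fun e => ∀ v ∈ e, v ∈ C with hp1
  set p2 : Sym2 V → Prop := fun e => ∃ a ∈ C, ∃ b ∉ C, e = s(a, b) with hp2
  -- per-edge count formula
  have hn : ∀ e ∈ T.edgeFinset, ∀ a b : V, e = s(a, b) →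
      (C.filter (· ∈ e)).card =
        (if a ∈ C then 1 else 0) + (if b ∈ C then 1 else 0) := by
    intro e he a b heq
    subst heq
    rw [SimpleGraph.mem_edgeFinset, SimpleGraph.mem_edgeSet] at he
    have hab : a ≠ b := he.ne
    have hfe : C.filter (· ∈ s(a, b)) = C.filter (fun v => v = a ∨ v = b) := by
      apply Finset.filter_congr
      intro v _
      simp [Sym2.mem_iff]
    rw [hfe, Finset.filter_or, Finset.filter_eq', Finset.filter_eq']
    by_cases haC : a ∈ C <;> by_cases hbC : b ∈ C <;> simp [haC, hbC]
    exact Finset.card_pair hab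
  -- handshake over C
  have hdeg_eq : ∀ v : V, T.degree v = (T.edgeFinset.filter (fun e => v ∈ e)).card := by
    intro v
    rw [← SimpleGraph.card_incidenceFinset_eq_degree, SimpleGraph.incidenceFinset_eq_filter]
  have key : ∑ v ∈ C, T.degree v = ∑ e ∈ T.edgeFinset, (C.filter (· ∈ e)).card := by
    simp_rw [hdeg_eq, Finset.card_filter]
    exact Finset.sum_comm
  have hleft : ∑ v ∈ C, T.degree v = 3 * C.card := by
    rw [Finset.sum_congr rfl hdegC, Finset.sum_const, smul_eq_mul, mul_comm]
  -- split the right side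
  have h1 : ∀ e ∈ T.edgeFinset.filter p1, (C.filter (· ∈ e)).card = 2 := by
    intro e he
    rw [Finset.mem_filter] at he
    obtain ⟨a, b, rfl⟩ := sym2_rep e
    rw [hn _ he.1 a b rfl]
    have ha : a ∈ C := he.2 a (by simp)
    have hb : b ∈ C := he.2 b (by simp)
    simp [ha, hb]
  have h2 : ∀ e ∈ T.edgeFinset.filter p2, (C.filter (· ∈ e)).card = 1 := by
    intro e he
    rw [Finset.mem_filter] at he
    obtain ⟨a, haC, b, hbC, heq⟩ := he.2
    rw [hn _ he.1 a b heq]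
    simp [haC, hbC]
  have h3 : ∀ e ∈ T.edgeFinset, ¬ p1 e → ¬ p2 e → (C.filter (· ∈ e)).card = 0 := by
    intro e he hnp1 hnp2
    obtain ⟨a, b, rfl⟩ := sym2_rep e
    have haC : a ∉ C := by
      intro haC
      by_cases hbC : b ∈ C
      · exact hnp1 (fun v hv => by
          rw [Sym2.mem_iff] at hv
          rcases hv with rfl | rfl <;> assumption)
      · exact hnp2 ⟨a, haC, b, hbC, rfl⟩
    have hbC : b ∉ C := by
      intro hbC
      by_cases haC' : a ∈ C
      · exact haC haC'
      · exact hnp2 ⟨b, hbC, a, haC', Sym2.eq_swap⟩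
    rw [hn _ he a b rfl]
    simp [haC, hbC]
  have hp2np1 : ∀ e ∈ T.edgeFinset, p2 e → ¬ p1 e := by
    intro e he hpe hp1e
    obtain ⟨a, haC, b, hbC, heq⟩ := hpe
    exact hbC (hp1e b (by rw [heq]; simp))
  have hsplit : ∑ e ∈ T.edgeFinset, (C.filter (· ∈ e)).card =
      2 * (T.edgeFinset.filter p1).card + (T.edgeFinset.filter p2).card := by
    rw [← Finset.sum_filter_add_sum_filter_not T.edgeFinset p1]
    have e1 : ∑ e ∈ T.edgeFinset.filter p1, (C.filter (· ∈ e)).card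
        = 2 * (T.edgeFinset.filter p1).card := by
      rw [Finset.sum_congr rfl h1, Finset.sum_const, smul_eq_mul, mul_comm]
    have hsub : (T.edgeFinset.filter (fun e => ¬ p1 e)).filter p2 = T.edgeFinset.filter p2 := by
      ext e
      simp only [Finset.mem_filter]
      constructor
      · rintro ⟨⟨he, -⟩, hp⟩; exact ⟨he, hp⟩
      · rintro ⟨he, hp⟩; exact ⟨⟨he, hp2np1 e he hp⟩, hp⟩
    have e2 : ∑ e ∈ T.edgeFinset.filter (fun e => ¬ p1 e), (C.filter (· ∈ e)).card
        = (T.edgeFinset.filter p2).card := by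
      rw [← Finset.sum_filter_of_ne (p := p2)
        (fun e he hne => by
          by_contra hnp2
          simp only [Finset.mem_filter] at he
          exact hne (h3 e he.1 he.2 hnp2)), hsub,
        Finset.sum_congr rfl h2, Finset.sum_const, smul_eq_mul, mul_one]
    rw [e1, e2]
  have hint : (T.edgeFinset.filter p1).card + 1 ≤ C.card := aux_int_bound hconn hacyc C hC
  rw [hleft] at key
  rw [hsplit] at key
  show C.card + 2 ≤ (T.edgeFinset.filter p2).card
  omega

end Aux

/-- Let `T` be a finite tree (a connected acyclic simple graph), let
`I` be a nonempty set of vertices of `T` of degree exactly 3, and let `E*` be a set of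
edges of `T` such that for every connected component `C` of the subgraph of `T` induced
by `I`, at most one of the edges of `T` with exactly one endpoint in `C` does not belong
to `E*`. Then `|E*| ≥ |I| + 1`. -/
theorem edges_cut_lower_bound
    {V : Type*} [Fintype V] [DecidableEq V]
    (T : SimpleGraph V) [DecidableRel T.Adj]
    (hconn : T.Connected) (hacyc : T.IsAcyclic)
    (I : Finset V) (hI : I.Nonempty)
    (hdeg : ∀ v ∈ I, T.degree v = 3)
    (Estar : Finset (Sym2 V)) (hEsub : Estar ⊆ T.edgeFinset)
    (hcomp : ∀ C : Finset V, C.Nonempty → C ⊆ I →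
      (∀ x ∈ C, ∀ y ∈ I,
        (Relation.ReflTransGen (fun a b => a ∈ I ∧ b ∈ I ∧ T.Adj a b) x y ↔ y ∈ C)) →
      (T.edgeFinset.filter fun e =>
        (∃ a ∈ C, ∃ b ∉ C, e = s(a, b)) ∧ e ∉ Estar).card ≤ 1) :
    I.card + 1 ≤ Estar.card := by
  classical
  set R : V → V → Prop := fun a b => a ∈ I ∧ b ∈ I ∧ T.Adj a b with hR
  have hRsymm : Symmetric (Relation.ReflTransGen R) :=
    by haveI : Std.Symm R := ⟨fun a b h => ⟨h.2.1, h.1, h.2.2.symm⟩⟩; exact fun x y h => Std.Symm.symm x y h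
  set comp : V → Finset V := fun v => I.filter (fun y => Relation.ReflTransGen R v y)
    with hcompd
  have hmem_self : ∀ v ∈ I, v ∈ comp v := fun v hv =>
    Finset.mem_filter.mpr ⟨hv, Relation.ReflTransGen.refl⟩
  have hcomp_subI : ∀ v, comp v ⊆ I := fun v => Finset.filter_subset _ _
  have hcomp_eq : ∀ u v, u ∈ comp v → comp u = comp v := by
    intro u v hu
    rw [hcompd] at hu ⊢
    simp only [Finset.mem_filter] at hu
    ext y
    simp only [Finset.mem_filter]
    exact ⟨fun ⟨hy, h⟩ => ⟨hy, hu.2.trans h⟩, fun ⟨hy, h⟩ => ⟨hy, (hRsymm hu.2).trans h⟩⟩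
  set BFin : Finset V → Finset (Sym2 V) :=
    fun C => T.edgeFinset.filter (fun e => ∃ a ∈ C, ∃ b ∉ C, e = s(a, b)) with hBFd
  set D : Finset V → Finset (Sym2 V) := fun C => BFin C ∩ Estar with hDd
  -- per component bound
  have hDbound : ∀ v ∈ I, (comp v).card + 1 ≤ (D (comp v)).card := by
    intro v hv
    have hCne : (comp v).Nonempty := ⟨v, hmem_self v hv⟩
    have hCsub : comp v ⊆ I := hcomp_subI v
    have hdegC : ∀ u ∈ comp v, T.degree u = 3 := fun u hu => hdeg u (hCsub hu)
    have hbd := aux_boundary_bound hconn hacyc (comp v) hCne hdegC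
    have hprop : ∀ x ∈ comp v, ∀ y ∈ I,
        (Relation.ReflTransGen R x y ↔ y ∈ comp v) := by
      intro x hx y hy
      rw [hcompd] at hx ⊢
      simp only [Finset.mem_filter] at hx ⊢
      exact ⟨fun h => ⟨hy, hx.2.trans h⟩, fun ⟨_, h⟩ => (hRsymm hx.2).trans h⟩
    have hc := hcomp (comp v) hCne hCsub hprop
    have hsd : T.edgeFinset.filter
        (fun e => (∃ a ∈ comp v, ∃ b ∉ comp v, e = s(a, b)) ∧ e ∉ Estar)
        = BFin (comp v) \ Estar := by
      ext e
      simp only [hBFd, Finset.mem_filter, Finset.mem_sdiff]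
      constructor
      · rintro ⟨he, hex, hne⟩; exact ⟨⟨he, hex⟩, hne⟩
      · rintro ⟨⟨he, hex⟩, hne⟩; exact ⟨he, hex, hne⟩
    rw [hsd] at hc
    have hpart := Finset.card_inter_add_card_sdiff (BFin (comp v)) Estar
    have hb' : (comp v).card + 2 ≤ (BFin (comp v)).card := by
      simp only [hBFd]; exact hbd
    have hD' : (D (comp v)).card = (BFin (comp v) ∩ Estar).card := by
      simp only [hDd]
    omega
  -- the set of components
  set comps : Finset (Finset V) := I.image comp with hcompsd
  have hmem_comps : ∀ C ∈ comps, ∃ v ∈ I, comp v = C := by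
    intro C hC
    rw [hcompsd, Finset.mem_image] at hC
    exact hC
  -- disjointness of the D's
  have hdisjD : ∀ C₁ ∈ comps, ∀ C₂ ∈ comps, C₁ ≠ C₂ → Disjoint (D C₁) (D C₂) := by
    intro C₁ h₁ C₂ h₂ hne
    obtain ⟨u, hu, rfl⟩ := hmem_comps C₁ h₁
    obtain ⟨w, hw, rfl⟩ := hmem_comps C₂ h₂
    rw [Finset.disjoint_left]
    intro e he₁ he₂
    rw [hDd] at he₁ he₂
    simp only [Finset.mem_inter, hBFd, Finset.mem_filter] at he₁ he₂
    obtain ⟨⟨heE, a₁, ha₁, b₁, hb₁, heq₁⟩, -⟩ := he₁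
    obtain ⟨⟨-, a₂, ha₂, b₂, hb₂, heq₂⟩, -⟩ := he₂
    rw [heq₁, Sym2.eq_iff] at heq₂
    have hadj : T.Adj a₁ b₁ := by
      rw [SimpleGraph.mem_edgeFinset, heq₁, SimpleGraph.mem_edgeSet] at heE
      exact heE
    rcases heq₂ with ⟨rfl, rfl⟩ | ⟨rfl, rfl⟩
    · exact hne ((hcomp_eq a₁ u ha₁).symm.trans (hcomp_eq a₁ w ha₂))
    · -- a₁ ∈ comp u, b₁ = a₂ ∈ comp w, a₁ ~ b₁ in I
      have ha₁I : a₁ ∈ I := hcomp_subI u ha₁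
      have hb₁I : b₁ ∈ I := hcomp_subI w ha₂
      have hRab : Relation.ReflTransGen R a₁ b₁ :=
        Relation.ReflTransGen.single ⟨ha₁I, hb₁I, hadj⟩
      have hb₁mem : b₁ ∈ comp a₁ := by
        rw [hcompd]; exact Finset.mem_filter.mpr ⟨hb₁I, hRab⟩
      have e1 : comp a₁ = comp u := hcomp_eq a₁ u ha₁
      have e2 : comp b₁ = comp w := hcomp_eq b₁ w ha₂
      have e3 : comp b₁ = comp a₁ := hcomp_eq b₁ a₁ hb₁mem
      exact hne (e1 ▸ e3 ▸ e2)
  -- disjointness of components themselves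
  have hdisjC : ∀ C₁ ∈ comps, ∀ C₂ ∈ comps, C₁ ≠ C₂ → Disjoint C₁ C₂ := by
    intro C₁ h₁ C₂ h₂ hne
    obtain ⟨u, hu, rfl⟩ := hmem_comps C₁ h₁
    obtain ⟨w, hw, rfl⟩ := hmem_comps C₂ h₂
    rw [Finset.disjoint_left]
    intro x hx₁ hx₂
    exact hne ((hcomp_eq x u hx₁).symm.trans (hcomp_eq x w hx₂))
  -- I is the union of components
  have hIunion : comps.biUnion id = I := by
    ext x
    simp only [Finset.mem_biUnion, id]
    constructor
    · rintro ⟨C, hC, hx⟩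
      obtain ⟨v, hv, rfl⟩ := hmem_comps C hC
      exact hcomp_subI v hx
    · intro hx
      exact ⟨comp x, Finset.mem_image_of_mem comp hx, hmem_self x hx⟩
  have hIcard : ∑ C ∈ comps, C.card = I.card := by
    rw [← hIunion]
    exact (Finset.card_biUnion hdisjC).symm
  -- assemble
  have hsub : comps.biUnion D ⊆ Estar := by
    intro e he
    rw [Finset.mem_biUnion] at he
    obtain ⟨C, hC, he⟩ := he
    rw [hDd] at he
    exact (Finset.mem_inter.mp he).2
  have hcard1 : (comps.biUnion D).card = ∑ C ∈ comps, (D C).card :=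
    Finset.card_biUnion hdisjD
  have hcard2 : ∑ C ∈ comps, (C.card + 1) ≤ ∑ C ∈ comps, (D C).card := by
    apply Finset.sum_le_sum
    intro C hC
    obtain ⟨v, hv, rfl⟩ := hmem_comps C hC
    exact hDbound v hv
  have hcompsne : 1 ≤ comps.card := by
    rw [hcompsd]
    exact Finset.card_pos.mpr (hI.image comp)
  have hsum : ∑ C ∈ comps, (C.card + 1) = I.card + comps.card := by
    rw [Finset.sum_add_distrib, hIcard, Finset.sum_const, smul_eq_mul, mul_one]
  have hEcard : (comps.biUnion D).card ≤ Estar.card := Finset.card_le_card hsub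
  omega
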